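/- Let L be a finite modular lattice and A a connected subset of the cover arcs of L. Then the diamond-closure of A equals the set of cover arcs of L induced on the sublattice of L generated by the vertices spanned by A, and this sublattice is cover-preserving. -/

import Mathlib

def IsDiamond {α : Type*} [PartialOrder α] (a b c d : α) : Prop :=
  b ≠ c ∧ b ⋖ a ∧ c ⋖ a ∧ d ⋖ b ∧ d ⋖ c

def DiamondClosed {α : Type*} [PartialOrder α] (S : Set (α × α)) : Prop :=
  ∀ a b c d : α, IsDiamond a b c d →
    (((a, b) ∈ S ∧ (a, c) ∈ S) ∨ ((b, d) ∈ S ∧ (c, d) ∈ S)) →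
    ((a, b) ∈ S ∧ (a, c) ∈ S ∧ (b, d) ∈ S ∧ (c, d) ∈ S)

/-- The diamond-closure: the smallest diamond-closed superset. -/
def diamondClosure {α : Type*} [PartialOrder α] (A : Set (α × α)) : Set (α × α) :=
  ⋂₀ {T | A ⊆ T ∧ DiamondClosed T}

def IsPathIn {α : Type*} (S : Set (α × α)) (x y : α) (l : List α) : Prop :=
  l.head? = some x ∧ l.getLast? = some y ∧
    l.Chain' (fun u v => (u, v) ∈ S ∨ (v, u) ∈ S)

def ArcVertex {α : Type*} (S : Set (α × α)) (x : α) : Prop :=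
  ∃ p ∈ S, p.1 = x ∨ p.2 = x

def ArcConnected {α : Type*} (S : Set (α × α)) : Prop :=
  ∀ x y, ArcVertex S x → ArcVertex S y → ∃ l, IsPathIn S x y l

def inducedArcs {α : Type*} [PartialOrder α] (K : Set α) : Set (α × α) :=
  {p | p.2 ⋖ p.1 ∧ p.1 ∈ K ∧ p.2 ∈ K}

/-- A subset `K` (with its induced order) is cover-preserving if covers in `K`
are covers in the ambient lattice. -/
def CoverPresSet {α : Type*} [Lattice α] (K : Set α) : Prop :=
  ∀ a b : K, a ⋖ b → (a : α) ⋖ (b : α)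

section Dev

lemma covBy_eq_of_lt_of_le {α : Type*} [PartialOrder α] {a b x : α}
    (h : a ⋖ b) (h1 : a < x) (h2 : x ≤ b) : x = b :=
  h2.lt_or_eq.resolve_left (h.2 h1)

lemma covBy_eq_of_le_of_lt {α : Type*} [PartialOrder α] {a b x : α}
    (h : a ⋖ b) (h1 : a ≤ x) (h2 : x < b) : x = a :=
  (h1.lt_or_eq.imp_left fun h' => absurd h2 (h.2 h')).resolve_left not_false |>.symm

variable {α : Type*} [Lattice α] [IsModularLattice α]

/-- Inductive presentation of the diamond closure. -/
inductive DC (A : Set (α × α)) : α × α → Prop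
  | base {p} : p ∈ A → DC A p
  | down1 {a b c d} : IsDiamond a b c d → DC A (a,b) → DC A (a,c) → DC A (b,d)
  | down2 {a b c d} : IsDiamond a b c d → DC A (a,b) → DC A (a,c) → DC A (c,d)
  | up1 {a b c d} : IsDiamond a b c d → DC A (b,d) → DC A (c,d) → DC A (a,b)
  | up2 {a b c d} : IsDiamond a b c d → DC A (b,d) → DC A (c,d) → DC A (a,c)

theorem diamond_sup_inf {a b c d : α} (h : IsDiamond a b c d) :
    a = b ⊔ c ∧ d = b ⊓ c := by
  obtain ⟨hbc, hba, hca, hdb, hdc⟩ := h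
  have hblt : b < b ⊔ c := by
    rcases (le_sup_left : b ≤ b ⊔ c).lt_or_eq with h | h
    · exact h
    · exfalso
      have hcb : c ≤ b := sup_eq_left.mp h.symm
      rcases hcb.lt_or_eq with h' | h'
      · exact hca.2 h' hba.lt
      · exact hbc h'.symm
  have hilt : b ⊓ c < b := by
    rcases (inf_le_left : b ⊓ c ≤ b).lt_or_eq with h | h
    · exact h
    · exfalso
      have hbc' : b ≤ c := h.symm.trans_le inf_le_right
      rcases hbc'.lt_or_eq with h' | h'
      · exact hba.2 h' hca.lt
      · exact hbc h'
  exact ⟨(covBy_eq_of_lt_of_le hba hblt (sup_le hba.le hca.le)).symm,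
    (covBy_eq_of_le_of_lt hdb (le_inf hdb.le hdc.le) hilt).symm⟩

/-- Modular lemma: two distinct covers of a common element are covered by their join. -/
theorem covSup {c x y : α} (hx : c ⋖ x) (hy : c ⋖ y) (hxy : x ≠ y) :
    x ⋖ x ⊔ y ∧ y ⋖ x ⊔ y := by
  have hinf : x ⊓ y = c := by
    refine covBy_eq_of_le_of_lt hx (le_inf hx.le hy.le) ?_
    rcases (inf_le_left : x ⊓ y ≤ x).lt_or_eq with h | h
    · exact h
    · exfalso
      have hxy' : x ≤ y := h.symm.trans_le inf_le_right
      rcases hxy'.lt_or_eq with h' | h'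
      · exact hy.2 hx.lt h'
      · exact hxy h'
  constructor
  · exact covBy_sup_of_inf_covBy_right (hinf ▸ hy)
  · exact covBy_sup_of_inf_covBy_left (hinf ▸ hx)

/-- Modular lemma: two distinct elements covered by a common element cover their meet. -/
theorem covInf {t x y : α} (hx : x ⋖ t) (hy : y ⋖ t) (hxy : x ≠ y) :
    x ⊓ y ⋖ x ∧ x ⊓ y ⋖ y := by
  have hsup : x ⊔ y = t := by
    refine covBy_eq_of_lt_of_le hx ?_ (sup_le hx.le hy.le)
    rcases (le_sup_left : x ≤ x ⊔ y).lt_or_eq with h | h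
    · exact h
    · exfalso
      have hyx : y ≤ x := sup_eq_left.mp h.symm
      rcases hyx.lt_or_eq with h' | h'
      · exact hy.2 h' hx.lt
      · exact hxy h'.symm
  constructor
  · exact inf_covBy_of_covBy_sup_right (hsup ▸ hy)
  · exact inf_covBy_of_covBy_sup_left (hsup ▸ hx)


variable {A : Set (α × α)}

/-- Increasing paths along arcs of `DC A`. -/
inductive UpPath (A : Set (α × α)) : α → α → Prop
  | refl (a : α) : UpPath A a a
  | step {a b c : α} : UpPath A a b → DC A (c, b) → UpPath A a c

variable (hA : ∀ p ∈ A, p.2 ⋖ p.1)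
include hA

theorem dc_cov : ∀ {p : α × α}, DC A p → p.2 ⋖ p.1 := by
  intro p h
  induction h with
  | base h => exact hA _ h
  | down1 hd _ _ _ _ => exact hd.2.2.2.1
  | down2 hd _ _ _ _ => exact hd.2.2.2.2
  | up1 hd _ _ _ _ => exact hd.2.1
  | up2 hd _ _ _ _ => exact hd.2.2.1

theorem upPath_le {a b : α} (h : UpPath A a b) : a ≤ b := by
  induction h with
  | refl => exact le_rfl
  | step _ he ih => exact ih.trans (dc_cov hA he).le

omit hA in
theorem upPath_trans {a b c : α} (h1 : UpPath A a b) (h2 : UpPath A b c) :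
    UpPath A a c := by
  induction h2 with
  | refl => exact h1
  | step _ he ih => exact ih.step he

/-- Transfer lemma: joining a covering arc along an increasing path. -/
theorem up_sup {a b c : α} (hba : DC A (b, a)) (hp : UpPath A a c) :
    UpPath A b (b ⊔ c) ∧ (b ⊔ c = c ∨ DC A (b ⊔ c, c)) := by
  induction hp with
  | refl =>
    have hs : b ⊔ a = b := sup_eq_left.mpr (dc_cov hA hba).le
    rw [hs]
    exact ⟨UpPath.refl b, Or.inr hba⟩
  | @step c c' hp he ih =>
    have hcc' : c ⋖ c' := dc_cov hA he
    have hsup : b ⊔ c ⊔ c' = b ⊔ c' := by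
      rw [sup_assoc, sup_eq_right.mpr hcc'.le]
    rcases ih.2 with heq | hE
    · have hb : b ≤ c := sup_eq_right.mp heq
      have h2 : b ⊔ c' = c' := sup_eq_right.mpr (hb.trans hcc'.le)
      rw [h2]
      refine ⟨?_, Or.inl rfl⟩
      have h3 := ih.1
      rw [heq] at h3
      exact h3.step he
    · by_cases hbc : b ⊔ c = c'
      · have h2 : b ⊔ c' = c' := sup_eq_right.mpr (hbc ▸ le_sup_left)
        rw [h2]
        refine ⟨?_, Or.inl rfl⟩
        have h3 := ih.1
        rwa [hbc] at h3
      · have h1 : c ⋖ b ⊔ c := dc_cov hA hE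
        have hcs := covSup h1 hcc' hbc
        have hd : IsDiamond (b ⊔ c ⊔ c') (b ⊔ c) c' c := ⟨hbc, hcs.1, hcs.2, h1, hcc'⟩
        have e1 : DC A (b ⊔ c ⊔ c', b ⊔ c) := DC.up1 hd hE he
        have e2 : DC A (b ⊔ c ⊔ c', c') := DC.up2 hd hE he
        rw [hsup] at e1 e2
        exact ⟨ih.1.step e1, Or.inr e2⟩

/-- Dual transfer lemma: meeting a covering arc along a decreasing traversal. -/
theorem down_inf {c b : α} (hp : UpPath A c b) :
    ∀ {a : α}, DC A (b, a) → UpPath A (a ⊓ c) a ∧ (a ⊓ c = c ∨ DC A (c, a ⊓ c)) := by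
  induction hp with
  | refl =>
    intro a hba
    have hs : a ⊓ c = a := inf_eq_left.mpr (dc_cov hA hba).le
    rw [hs]
    exact ⟨UpPath.refl a, Or.inr hba⟩
  | @step b' b hp he ih =>
    intro a hba
    have hab : a ⋖ b := dc_cov hA hba
    have hb'b : b' ⋖ b := dc_cov hA he
    have hcb' : c ≤ b' := upPath_le hA hp
    by_cases hab' : a = b'
    · have hs : a ⊓ c = c := inf_eq_right.mpr (hab' ▸ hcb')
      rw [hs]
      exact ⟨hab' ▸ hp, Or.inl rfl⟩
    · have hci := covInf hab hb'b hab'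
      have hd : IsDiamond b a b' (a ⊓ b') := ⟨hab', hab, hb'b, hci.1, hci.2⟩
      have e1 : DC A (a, a ⊓ b') := DC.down1 hd hba he
      have e2 : DC A (b', a ⊓ b') := DC.down2 hd hba he
      have hinf : a ⊓ b' ⊓ c = a ⊓ c := by
        rw [inf_assoc, inf_eq_right.mpr hcb']
      obtain ⟨ih1, ih2⟩ := ih e2
      rw [hinf] at ih1 ih2
      exact ⟨ih1.step e1, ih2⟩

/-- Valley lemma: two elements above a common point reachable by increasing
paths have increasing paths to their join. -/
theorem valley_sup {w x y : α} (h1 : UpPath A w x) (h2 : UpPath A w y) :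
    UpPath A x (x ⊔ y) ∧ UpPath A y (x ⊔ y) := by
  induction h1 with
  | refl =>
    have hs : w ⊔ y = y := sup_eq_right.mpr (upPath_le hA h2)
    rw [hs]
    exact ⟨h2, UpPath.refl y⟩
  | @step x' x hp he ih =>
    have hx'x : x' ≤ x := (dc_cov hA he).le
    obtain ⟨u1, u2⟩ := up_sup hA he ih.1
    have hsup : x ⊔ (x' ⊔ y) = x ⊔ y := by
      rw [← sup_assoc, sup_eq_left.mpr hx'x]
    rw [hsup] at u1 u2
    refine ⟨u1, ?_⟩
    rcases u2 with heq | hE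
    · rw [← heq] at ih; exact ih.2
    · exact ih.2.step hE

/-- Mountain lemma: two elements below a common point reachable by increasing
paths have increasing paths from their meet. -/
theorem mountain_inf {w x : α} (h1 : UpPath A x w) :
    ∀ {y : α}, UpPath A y w → UpPath A (x ⊓ y) x ∧ UpPath A (x ⊓ y) y := by
  induction h1 with
  | refl =>
    intro y h2
    have hs : x ⊓ y = y := inf_eq_right.mpr (upPath_le hA h2)
    rw [hs]
    exact ⟨h2, UpPath.refl y⟩
  | @step w' w hp he ih =>
    intro y h2
    obtain ⟨d1, d2⟩ := down_inf hA h2 he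
    have hxw' : x ≤ w' := upPath_le hA hp
    obtain ⟨m1, m2⟩ := ih d1
    have hinf : x ⊓ (w' ⊓ y) = x ⊓ y := by
      rw [← inf_assoc, inf_eq_left.mpr hxw']
    rw [hinf] at m1 m2
    refine ⟨m1, ?_⟩
    rcases d2 with heq | hE
    · rw [heq] at m2; exact m2
    · exact upPath_trans m2 ((UpPath.refl _).step hE)

omit hA in
/-- Undirected connectivity along arcs of `DC A`. -/
def Conn (A : Set (α × α)) (x y : α) : Prop :=
  Relation.ReflTransGen (fun u v => DC A (u, v) ∨ DC A (v, u)) x y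

/-- Main lemma: connected elements have monotone arc-paths to their join
and from their meet. -/
theorem conn_main {x y : α} (h : Conn A x y) :
    (UpPath A x (x ⊔ y) ∧ UpPath A y (x ⊔ y)) ∧
      (UpPath A (x ⊓ y) x ∧ UpPath A (x ⊓ y) y) := by
  induction h using Relation.ReflTransGen.head_induction_on with
  | refl =>
    rw [sup_idem, inf_idem]
    exact ⟨⟨UpPath.refl y, UpPath.refl y⟩, ⟨UpPath.refl y, UpPath.refl y⟩⟩
  | @head x z hxz _ ih =>
    obtain ⟨⟨j1, j2⟩, ⟨m1, m2⟩⟩ := ih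
    rcases hxz with hE | hE
    · -- z ⋖ x
      have hzx : z ≤ x := (dc_cov hA hE).le
      have hsup : x ⊔ (z ⊔ y) = x ⊔ y := by rw [← sup_assoc, sup_eq_left.mpr hzx]
      obtain ⟨u1, u2⟩ := up_sup hA hE j1
      rw [hsup] at u1 u2
      have jy : UpPath A y (x ⊔ y) := by
        rcases u2 with heq | hEE
        · rw [← heq] at j2; exact j2
        · exact upPath_trans j2 ((UpPath.refl _).step hEE)
      have hmt := mountain_inf hA u1 jy
      exact ⟨⟨u1, jy⟩, hmt⟩
    · -- x ⋖ z
      have hxz' : x ≤ z := (dc_cov hA hE).le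
      have hinf : x ⊓ (z ⊓ y) = x ⊓ y := by rw [← inf_assoc, inf_eq_left.mpr hxz']
      obtain ⟨d1, d2⟩ := down_inf hA m1 hE
      rw [hinf] at d1 d2
      have my : UpPath A (x ⊓ y) y := by
        rcases d2 with heq | hEE
        · rw [heq] at d1 ⊢; exact m2
        · exact upPath_trans ((UpPath.refl _).step hEE) m2
      have hv := valley_sup hA d1 my
      exact ⟨hv, ⟨d1, my⟩⟩

omit hA

theorem dc_subset_closed {T : Set (α × α)} (hAT : A ⊆ T) (hT : DiamondClosed T) :
    ∀ {p : α × α}, DC A p → p ∈ T := by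
  intro p h
  induction h with
  | base h => exact hAT h
  | down1 hd _ _ ih1 ih2 => exact (hT _ _ _ _ hd (Or.inl ⟨ih1, ih2⟩)).2.2.1
  | down2 hd _ _ ih1 ih2 => exact (hT _ _ _ _ hd (Or.inl ⟨ih1, ih2⟩)).2.2.2
  | up1 hd _ _ ih1 ih2 => exact (hT _ _ _ _ hd (Or.inr ⟨ih1, ih2⟩)).1
  | up2 hd _ _ ih1 ih2 => exact (hT _ _ _ _ hd (Or.inr ⟨ih1, ih2⟩)).2.1

theorem dc_closed : DiamondClosed {p : α × α | DC A p} := by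
  intro a b c d hd h
  rcases h with ⟨h1, h2⟩ | ⟨h1, h2⟩
  · exact ⟨h1, h2, DC.down1 hd h1 h2, DC.down2 hd h1 h2⟩
  · exact ⟨DC.up1 hd h1 h2, DC.up2 hd h1 h2, h1, h2⟩

theorem diamondClosure_eq_dc : diamondClosure A = {p : α × α | DC A p} := by
  apply Set.Subset.antisymm
  · exact Set.sInter_subset_of_mem ⟨fun p hp => DC.base hp, dc_closed⟩
  · intro p hp T hT
    exact dc_subset_closed hT.1 hT.2 hp

theorem conn_symm {x y : α} (h : Conn A x y) : Conn A y x :=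
  by
    unfold Conn at h ⊢
    induction h with
    | refl => exact Relation.ReflTransGen.refl
    | tail _ hb ih => exact Relation.ReflTransGen.head (Or.symm hb) ih

theorem conn_trans {x y z : α} (h1 : Conn A x y) (h2 : Conn A y z) : Conn A x z :=
  Relation.ReflTransGen.trans h1 h2

theorem pathIn_conn {x y : α} {l : List α} (h : IsPathIn A x y l) : Conn A x y := by
  induction l generalizing x with
  | nil => exact absurd h.1 (by simp)
  | cons a t ih =>
    obtain ⟨hh, hl, hc⟩ := h
    have hax : a = x := by simpa using hh
    subst hax
    cases t with
    | nil =>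
      have : a = y := by simpa using hl
      subst this
      exact Relation.ReflTransGen.refl
    | cons b t' =>
      replace hc := List.isChain_cons_cons.mp hc
      have hby : Conn A b y := ih ⟨rfl, by simpa using hl, hc.2⟩
      refine Relation.ReflTransGen.head ?_ hby
      rcases hc.1 with h | h
      · exact Or.inl (DC.base h)
      · exact Or.inr (DC.base h)

/-- Vertices of `DC A`. -/
def WSet (A : Set (α × α)) : Set α := {v | ArcVertex {p : α × α | DC A p} v}

theorem conn_base (hconn : ArcConnected A) {p0 : α × α} (hp0 : p0 ∈ A) :
    ∀ {p : α × α}, DC A p → Conn A p.1 p0.1 ∧ Conn A p.2 p0.1 := by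
  have hv0 : ArcVertex A p0.1 := ⟨p0, hp0, Or.inl rfl⟩
  intro p h
  induction h with
  | @base p h =>
    have h1 : ArcVertex A p.1 := ⟨p, h, Or.inl rfl⟩
    have h2 : ArcVertex A p.2 := ⟨p, h, Or.inr rfl⟩
    obtain ⟨l1, hl1⟩ := hconn _ _ h1 hv0
    obtain ⟨l2, hl2⟩ := hconn _ _ h2 hv0
    exact ⟨pathIn_conn hl1, pathIn_conn hl2⟩
  | @down1 a b c d hd h1 h2 ih1 ih2 =>
    exact ⟨ih1.2, Relation.ReflTransGen.head (Or.inr (DC.down1 hd h1 h2)) ih1.2⟩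
  | @down2 a b c d hd h1 h2 ih1 ih2 =>
    exact ⟨ih2.2, Relation.ReflTransGen.head (Or.inr (DC.down2 hd h1 h2)) ih2.2⟩
  | @up1 a b c d hd h1 h2 ih1 ih2 =>
    exact ⟨Relation.ReflTransGen.head (Or.inl (DC.up1 hd h1 h2)) ih1.1, ih1.1⟩
  | @up2 a b c d hd h1 h2 ih1 ih2 =>
    exact ⟨Relation.ReflTransGen.head (Or.inl (DC.up2 hd h1 h2)) ih2.1, ih2.1⟩

theorem conn_of_vertices (hconn : ArcConnected A) {p0 : α × α} (hp0 : p0 ∈ A)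
    {x y : α} (hx : x ∈ WSet A) (hy : y ∈ WSet A) : Conn A x y := by
  obtain ⟨p, hp, hxp⟩ := hx
  obtain ⟨q, hq, hyq⟩ := hy
  have cx : Conn A x p0.1 := by
    rcases hxp with h | h
    · exact h ▸ (conn_base hconn hp0 hp).1
    · exact h ▸ (conn_base hconn hp0 hp).2
  have cy : Conn A y p0.1 := by
    rcases hyq with h | h
    · exact h ▸ (conn_base hconn hp0 hq).1
    · exact h ▸ (conn_base hconn hp0 hq).2
  exact conn_trans cx (conn_symm cy)

theorem upPath_top_mem {a s : α} (h : UpPath A a s) (ha : a ∈ WSet A) :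
    s ∈ WSet A := by
  cases h with
  | refl => exact ha
  | step _ he => exact ⟨_, he, Or.inl rfl⟩

theorem upPath_bot_mem {a s : α} (h : UpPath A a s) : a = s ∨ a ∈ WSet A := by
  induction h with
  | refl => exact Or.inl rfl
  | @step b c _ he ih =>
    rcases ih with h | h
    · exact Or.inr ⟨_, he, Or.inr (h ▸ rfl)⟩
    · exact Or.inr h

theorem dc_vertex_mem_closure {p : α × α} (h : DC A p) :
    p.1 ∈ latticeClosure {v | ArcVertex A v} ∧
      p.2 ∈ latticeClosure {v | ArcVertex A v} := by
  induction h with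
  | @base p h =>
    exact ⟨subset_latticeClosure ⟨p, h, Or.inl rfl⟩,
      subset_latticeClosure ⟨p, h, Or.inr rfl⟩⟩
  | @down1 a b c d hd h1 h2 ih1 ih2 =>
    refine ⟨ih1.2, ?_⟩
    show d ∈ _
    rw [(diamond_sup_inf hd).2]
    exact isSublattice_latticeClosure.infClosed ih1.2 ih2.2
  | @down2 a b c d hd h1 h2 ih1 ih2 =>
    refine ⟨ih2.2, ?_⟩
    show d ∈ _
    rw [(diamond_sup_inf hd).2]
    exact isSublattice_latticeClosure.infClosed ih1.2 ih2.2
  | @up1 a b c d hd h1 h2 ih1 ih2 =>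
    refine ⟨?_, ih1.1⟩
    show a ∈ _
    rw [(diamond_sup_inf hd).1]
    exact isSublattice_latticeClosure.supClosed ih1.1 ih2.1
  | @up2 a b c d hd h1 h2 ih1 ih2 =>
    refine ⟨?_, ih2.1⟩
    show a ∈ _
    rw [(diamond_sup_inf hd).1]
    exact isSublattice_latticeClosure.supClosed ih1.1 ih2.1

theorem wset_eq_closure (hA : ∀ p ∈ A, p.2 ⋖ p.1) (hconn : ArcConnected A)
    {p0 : α × α} (hp0 : p0 ∈ A) :
    WSet A = latticeClosure {v | ArcVertex A v} := by
  apply Set.Subset.antisymm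
  · rintro x ⟨p, hp, hx⟩
    rcases hx with h | h
    · exact h ▸ (dc_vertex_mem_closure hp).1
    · exact h ▸ (dc_vertex_mem_closure hp).2
  · refine latticeClosure_min ?_ ?_
    · rintro x ⟨p, hp, hx⟩
      exact ⟨p, DC.base hp, hx⟩
    · constructor
      · intro x hx y hy
        have hc := conn_of_vertices hconn hp0 hx hy
        exact upPath_top_mem ((conn_main hA hc).1.1) hx
      · intro x hx y hy
        have hc := conn_of_vertices hconn hp0 hx hy
        rcases upPath_bot_mem ((conn_main hA hc).2.1) with h | h
        · rw [h]; exact hx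
        · exact h

theorem upPath_cases' {a b : α} (h : UpPath A a b) :
    a = b ∨ ∃ c, UpPath A a c ∧ DC A (b, c) := by
  cases h with
  | refl => exact Or.inl rfl
  | step hp he => exact Or.inr ⟨_, hp, he⟩

theorem upPath_covBy {a b : α} (hA : ∀ p ∈ A, p.2 ⋖ p.1)
    (h : UpPath A a b) (hab : a ⋖ b) : DC A (b, a) := by
  cases h with
  | refl => exact absurd hab.lt (lt_irrefl _)
  | @step c _ hp he =>
    have hac : a ≤ c := upPath_le hA hp
    rcases hac.lt_or_eq with h | h
    · exact absurd (dc_cov hA he).lt (hab.2 h)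
    · exact h ▸ he

end Dev

/-- In a finite modular lattice, for a connected set `A` of cover arcs, the
diamond-closure of `A` equals the set of cover arcs induced on the sublattice
generated by the vertices spanned by `A`, and this sublattice is cover-preserving. -/
theorem diamondClosure_of_connected
    {α : Type*} [Lattice α] [Fintype α] [IsModularLattice α]
    (A : Set (α × α)) (hA : ∀ p ∈ A, p.2 ⋖ p.1) (hconn : ArcConnected A) :
    diamondClosure A = inducedArcs (latticeClosure {v | ArcVertex A v}) ∧
      CoverPresSet (latticeClosure {v | ArcVertex A v} : Set α) := by
  by_cases hne : A.Nonempty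
  · obtain ⟨p0, hp0⟩ := hne
    have hWK := wset_eq_closure hA hconn hp0
    constructor
    · rw [diamondClosure_eq_dc]
      apply Set.Subset.antisymm
      · intro p hp
        exact ⟨dc_cov hA hp, (dc_vertex_mem_closure hp).1, (dc_vertex_mem_closure hp).2⟩
      · rintro p ⟨hcov, h1, h2⟩
        rw [← hWK] at h1 h2
        have hc : Conn A p.2 p.1 := conn_of_vertices hconn hp0 h2 h1
        have hu := (conn_main hA hc).1.1
        rw [sup_eq_right.mpr hcov.le] at hu
        have : DC A (p.1, p.2) := upPath_covBy hA hu hcov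
        simpa using this
    · intro a b hab
      have hlt : (a : α) < (b : α) := Subtype.coe_lt_coe.mpr hab.lt
      have ha : (a : α) ∈ WSet A := by rw [hWK]; exact a.2
      have hb : (b : α) ∈ WSet A := by rw [hWK]; exact b.2
      have hc : Conn A (a : α) (b : α) := conn_of_vertices hconn hp0 ha hb
      have hu := (conn_main hA hc).1.1
      rw [sup_eq_right.mpr hlt.le] at hu
      rcases upPath_cases' hu with heq | ⟨c, hp, he⟩
      · exact absurd (heq ▸ hlt) (lt_irrefl _)
      · have hcb : c ⋖ (b : α) := dc_cov hA he
        rcases (upPath_le hA hp).lt_or_eq with h | h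
        · exfalso
          have hcK : c ∈ latticeClosure {v | ArcVertex A v} := by
            rw [← hWK]; exact ⟨_, he, Or.inr rfl⟩
          have h1 : a < (⟨c, hcK⟩ : latticeClosure {v | ArcVertex A v}) :=
            Subtype.coe_lt_coe.mp h
          have h2 : (⟨c, hcK⟩ : latticeClosure {v | ArcVertex A v}) < b :=
            Subtype.coe_lt_coe.mp hcb.lt
          exact hab.2 h1 h2
        · rw [← h] at hcb; exact hcb
  · have hAe : A = ∅ := Set.not_nonempty_iff_eq_empty.mp hne
    subst hAe
    have hV : {v | ArcVertex (∅ : Set (α × α)) v} = (∅ : Set α) := by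
      ext v
      simp [ArcVertex]
    rw [hV, latticeClosure_empty]
    have hdc : diamondClosure (∅ : Set (α × α)) = ∅ := by
      apply Set.Subset.antisymm
      · refine Set.sInter_subset_of_mem ⟨Set.empty_subset _, ?_⟩
        rintro a b c d _ (⟨h, -⟩ | ⟨h, -⟩) <;> exact absurd h (Set.notMem_empty _)
      · exact Set.empty_subset _
    have hind : inducedArcs (∅ : Set α) = ∅ := by
      ext p
      simp [inducedArcs]
    rw [hdc, hind]
    exact ⟨rfl, fun a => absurd a.2 (Set.notMem_empty _)⟩
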